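/- Let A = A1 ×_C A2 be the fibered product of surjective unital algebra homomorphisms p1 : A1 → C, p2 : A2 → C. A homomorphism h ∈ Spec_ℝ(A) lies in the image of both |π1| : Spec_ℝ(A1) → Spec_ℝ(A) and |π2| : Spec_ℝ(A2) → Spec_ℝ(A) if and only if h factors through p1 ∘ π1 = p2 ∘ π2 : A → C. Consequently Spec_ℝ(A) is the gluing (pushout as sets) of Spec_ℝ(A1) and Spec_ℝ(A2) along Spec_ℝ(C). -/

import Mathlib

/-- Descend an algebra map along a surjective algebra map whose kernel it kills. -/
lemma descend_along_surjective {A B : Type} [CommRing A] [CommRing B]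
    [Algebra ℝ A] [Algebra ℝ B]
    (f : A →ₐ[ℝ] B) (hf : Function.Surjective f) (g : A →ₐ[ℝ] ℝ)
    (hker : ∀ a, f a = 0 → g a = 0) :
    ∃ g' : B →ₐ[ℝ] ℝ, g = g'.comp f := by
  have hI : ∀ a : A, a ∈ RingHom.ker f → g a = 0 := fun a ha => hker a ha
  let lift := Ideal.Quotient.liftₐ (RingHom.ker (f : A →ₐ[ℝ] B)) g hI
  let e := Ideal.quotientKerAlgEquivOfSurjective hf
  refine ⟨lift.comp e.symm.toAlgHom, ?_⟩
  ext a
  have h1 : e (Ideal.Quotient.mk (RingHom.ker f) a) = f a := by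
    simp only [e, Ideal.quotientKerAlgEquivOfSurjective,
      Ideal.quotientKerAlgEquivOfRightInverse_apply]
    exact RingHom.kerLift_mk _ a
  have h2 : e.symm (f a) = Ideal.Quotient.mk (RingHom.ker f) a := by
    rw [← h1, AlgEquiv.symm_apply_apply]
  simp [lift, h2, RingHom.kerLift_mk]
  rfl

/-- The fibered product `A = A₁ ×_C A₂` as a subalgebra of `A₁ × A₂`. -/
noncomputable def fiberProd {A1 A2 C : Type} [CommRing A1] [CommRing A2] [CommRing C]
    [Algebra ℝ A1] [Algebra ℝ A2] [Algebra ℝ C]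
    (p1 : A1 →ₐ[ℝ] C) (p2 : A2 →ₐ[ℝ] C) : Subalgebra ℝ (A1 × A2) :=
  AlgHom.equalizer (p1.comp (AlgHom.fst ℝ A1 A2)) (p2.comp (AlgHom.snd ℝ A1 A2))

lemma mem_fiberProd {A1 A2 C : Type} [CommRing A1] [CommRing A2] [CommRing C]
    [Algebra ℝ A1] [Algebra ℝ A2] [Algebra ℝ C]
    (p1 : A1 →ₐ[ℝ] C) (p2 : A2 →ₐ[ℝ] C) (x : A1 × A2) :
    x ∈ fiberProd p1 p2 ↔ p1 x.1 = p2 x.2 := Iff.rfl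

/-- a point `h ∈ Spec_ℝ A` lies in the image of both `|π₁|` and `|π₂|`
iff it factors through `C`; consequently `Spec_ℝ A` is the gluing of `Spec_ℝ A₁`
and `Spec_ℝ A₂` along `Spec_ℝ C` (every point comes from `A₁` or from `A₂`). -/
theorem spectrum_is_gluing
    {A1 A2 C : Type} [CommRing A1] [CommRing A2] [CommRing C]
    [Algebra ℝ A1] [Algebra ℝ A2] [Algebra ℝ C]
    (p1 : A1 →ₐ[ℝ] C) (p2 : A2 →ₐ[ℝ] C)
    (hp1 : Function.Surjective p1) (hp2 : Function.Surjective p2) :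
    (∀ h : fiberProd p1 p2 →ₐ[ℝ] ℝ,
      (((∃ h1 : A1 →ₐ[ℝ] ℝ,
            h = h1.comp ((AlgHom.fst ℝ A1 A2).comp (fiberProd p1 p2).val)) ∧
        (∃ h2 : A2 →ₐ[ℝ] ℝ,
            h = h2.comp ((AlgHom.snd ℝ A1 A2).comp (fiberProd p1 p2).val))) ↔
        (∃ hC : C →ₐ[ℝ] ℝ,
            h = hC.comp ((p1.comp (AlgHom.fst ℝ A1 A2)).comp (fiberProd p1 p2).val)))) ∧
    (∀ h : fiberProd p1 p2 →ₐ[ℝ] ℝ,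
      (∃ h1 : A1 →ₐ[ℝ] ℝ,
          h = h1.comp ((AlgHom.fst ℝ A1 A2).comp (fiberProd p1 p2).val)) ∨
      (∃ h2 : A2 →ₐ[ℝ] ℝ,
          h = h2.comp ((AlgHom.snd ℝ A1 A2).comp (fiberProd p1 p2).val))) := by
  set S := fiberProd p1 p2 with hS
  -- the first projection restricted to S, and its surjectivity
  have hfst : Function.Surjective ((AlgHom.fst ℝ A1 A2).comp S.val) := by
    intro a1
    obtain ⟨a2, ha2⟩ := hp2 (p1 a1)
    exact ⟨⟨(a1, a2), ha2.symm⟩, rfl⟩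
  have hsnd : Function.Surjective ((AlgHom.snd ℝ A1 A2).comp S.val) := by
    intro a2
    obtain ⟨a1, ha1⟩ := hp1 (p2 a2)
    exact ⟨⟨(a1, a2), ha1⟩, rfl⟩
  have hq : Function.Surjective ((p1.comp (AlgHom.fst ℝ A1 A2)).comp S.val) := by
    intro c
    obtain ⟨a1, ha1⟩ := hp1 c
    obtain ⟨a2, ha2⟩ := hp2 c
    exact ⟨⟨(a1, a2), (mem_fiberProd p1 p2 _).mpr (by rw [ha1, ha2])⟩, ha1⟩
  constructor
  · intro h
    constructor
    · rintro ⟨⟨h1, e1⟩, ⟨h2, e2⟩⟩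
      apply descend_along_surjective _ hq
      intro x hx
      have hx' : (p1 (x : A1 × A2).1 : C) = 0 := hx
      have hx2 : (p2 (x : A1 × A2).2 : C) = 0 := by
        have := x.2; rw [mem_fiberProd] at this; rw [← this]; exact hx'
      have hu : ((x : A1 × A2).1, (0 : A2)) ∈ S :=
        (mem_fiberProd p1 p2 _).mpr (by simp [hx'])
      have hv : ((0 : A1), (x : A1 × A2).2) ∈ S :=
        (mem_fiberProd p1 p2 _).mpr (by simp [hx2])
      have hsum : x = (⟨((x : A1 × A2).1, 0), hu⟩ : S) + ⟨(0, (x : A1 × A2).2), hv⟩ := by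
        ext <;> simp
      rw [hsum, map_add]
      have h1v : h ⟨(0, (x : A1 × A2).2), hv⟩ = 0 := by
        rw [e1]; exact map_zero h1
      have h2u : h ⟨((x : A1 × A2).1, 0), hu⟩ = 0 := by
        rw [e2]; exact map_zero h2
      rw [h1v, h2u, add_zero]
    · rintro ⟨hC, e⟩
      constructor
      · exact ⟨hC.comp p1, by rw [e]; rfl⟩
      · refine ⟨hC.comp p2, ?_⟩
        rw [e]
        ext x
        have := (mem_fiberProd p1 p2 _).mp x.2
        show hC (p1 (x : A1 × A2).1) = hC (p2 (x : A1 × A2).2)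
        rw [this]
  · intro h
    by_cases H : ∀ x : S, (x : A1 × A2).1 = 0 → h x = 0
    · left
      exact descend_along_surjective _ hfst h H
    · right
      push_neg at H
      obtain ⟨x, hx1, hx0⟩ := H
      apply descend_along_surjective _ hsnd
      intro y hy
      have hy' : (y : A1 × A2).2 = 0 := hy
      have hxy : x * y = 0 := by
        ext
        · show (x : A1 × A2).1 * (y : A1 × A2).1 = 0
          rw [hx1, zero_mul]
        · show (x : A1 × A2).2 * (y : A1 × A2).2 = 0
          rw [hy', mul_zero]
      have : h x * h y = 0 := by rw [← map_mul, hxy, map_zero]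
      rcases mul_eq_zero.mp this with h' | h'
      · exact absurd h' hx0
      · exact h'
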